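/- Let f : ℝⁿ → ℝ be twice continuously differentiable with L_H-Lipschitz Hessian. Fix x ∈ ℝⁿ, set g := ∇f(x) and H := ∇²f(x), and suppose g ≠ 0. Let σ > 0, ς₃ ∈ [0,1), κ_θ > 0, κ_C > 0, set μ := [−λ_min(H)]₊, and suppose μ ≤ κ_C·√(σ‖g‖). Let s ∈ ℝⁿ satisfy ‖(H + (√(σ‖g‖) + μ)·I)s + g‖ ≤ min(ς₃·√(σ‖g‖)·‖s‖, κ_θ·‖g‖). Then ‖∇f(x+s)‖ ≤ (L_H(1+κ_θ)/(2σ) + 1 + ς₃ + κ_C)·(1+κ_θ)·‖g‖. -/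

import Mathlib

open RealInnerProductSpace

set_option synthInstance.maxHeartbeats 1000000
set_option maxHeartbeats 1000000

/-- The smallest eigenvalue of a symmetric operator on ℝⁿ, as the infimum of the
Rayleigh quotient over the unit sphere. -/
noncomputable def lamMin {n : ℕ} (T : EuclideanSpace ℝ (Fin n) → EuclideanSpace ℝ (Fin n)) : ℝ :=
  sInf {r : ℝ | ∃ v : EuclideanSpace ℝ (Fin n), ‖v‖ = 1 ∧ ⟪v, T v⟫ = r}

lemma taylor_grad {n : ℕ} (f : EuclideanSpace ℝ (Fin n) → ℝ)
    (Hess : EuclideanSpace ℝ (Fin n) → EuclideanSpace ℝ (Fin n) →L[ℝ] EuclideanSpace ℝ (Fin n))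
    (LH : ℝ) (hLH : 0 ≤ LH)
    (hHess : ∀ y, HasFDerivAt (gradient f) (Hess y) y)
    (hLip : ∀ y z, ‖Hess y - Hess z‖ ≤ LH * ‖y - z‖)
    (x s : EuclideanSpace ℝ (Fin n)) :
    ‖gradient f (x + s) - gradient f x - Hess x s‖ ≤ LH / 2 * ‖s‖ ^ 2 := by
  set φ : ℝ → EuclideanSpace ℝ (Fin n) := fun t => gradient f (x + t • s) - t • (Hess x s) with hφ
  have hderiv : ∀ t : ℝ, HasDerivAt φ (Hess (x + t • s) s - Hess x s) t := by
    intro t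
    have hc : HasDerivAt (fun t : ℝ => x + t • s) s t := by
      simpa using (((hasDerivAt_id t).smul_const s).const_add x)
    have h1 : HasDerivAt (fun t : ℝ => gradient f (x + t • s)) (Hess (x + t • s) s) t :=
      by have := (hHess (x + t • s)).comp_hasDerivAt t hc; exact this
    have h2 := h1.sub ((hasDerivAt_id t).smul_const (Hess x s))
    rw [one_smul] at h2
    exact h2
  have hcont : Continuous fun t : ℝ => Hess (x + t • s) s - Hess x s := by
    have hL : LipschitzWith (Real.toNNReal LH) Hess := by
      apply LipschitzWith.of_dist_le_mul
      intro y z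
      rw [dist_eq_norm, dist_eq_norm]
      simpa [Real.coe_toNNReal LH hLH] using hLip y z
    have hc2 : Continuous fun t : ℝ => x + t • s :=
      continuous_const.add (continuous_id.smul continuous_const)
    have hHc : Continuous fun t : ℝ => Hess (x + t • s) := hL.continuous.comp hc2
    exact ((ContinuousLinearMap.apply ℝ (EuclideanSpace ℝ (Fin n))
      s).continuous.comp hHc).sub continuous_const
  have hint : IntervalIntegrable (fun t : ℝ => Hess (x + t • s) s - Hess x s)
      MeasureTheory.volume 0 1 := hcont.intervalIntegrable 0 1
  have heq : φ 1 - φ 0 = ∫ t in (0:ℝ)..1, (Hess (x + t • s) s - Hess x s) :=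
    (intervalIntegral.integral_eq_sub_of_hasDerivAt (fun t _ => hderiv t) hint).symm
  have hφ10 : φ 1 - φ 0 = gradient f (x + s) - gradient f x - Hess x s := by
    simp [hφ]
    abel
  have hbound : ∀ t ∈ Set.uIoc (0:ℝ) 1,
      ‖Hess (x + t • s) s - Hess x s‖ ≤ LH * ‖s‖ ^ 2 * t := by
    intro t ht
    rw [Set.uIoc_of_le zero_le_one] at ht
    have h1 : ‖Hess (x + t • s) s - Hess x s‖ ≤ ‖Hess (x + t • s) - Hess x‖ * ‖s‖ := by
      have := (Hess (x + t • s) - Hess x).le_opNorm s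
      simpa using this
    have h2 : ‖Hess (x + t • s) - Hess x‖ ≤ LH * (t * ‖s‖) := by
      have := hLip (x + t • s) x
      simpa [norm_smul, abs_of_pos ht.1] using this
    calc ‖Hess (x + t • s) s - Hess x s‖ ≤ (LH * (t * ‖s‖)) * ‖s‖ :=
          h1.trans (by nlinarith [norm_nonneg s, norm_nonneg (Hess (x + t • s) - Hess x)])
      _ = LH * ‖s‖ ^ 2 * t := by ring
  have hnorm : ‖∫ t in (0:ℝ)..1, (Hess (x + t • s) s - Hess x s)‖
      ≤ |∫ t in (0:ℝ)..1, LH * ‖s‖ ^ 2 * t| := by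
    apply intervalIntegral.norm_integral_le_abs_of_norm_le
    · exact (MeasureTheory.ae_restrict_iff' measurableSet_uIoc).2
        (MeasureTheory.ae_of_all _ hbound)
    · exact (continuous_const.mul continuous_id).intervalIntegrable 0 1
  have hval : (∫ t in (0:ℝ)..1, LH * ‖s‖ ^ 2 * t) = LH / 2 * ‖s‖ ^ 2 := by
    rw [intervalIntegral.integral_const_mul, integral_id]
    ring
  rw [← hφ10, heq]
  refine hnorm.trans ?_
  rw [hval, abs_of_nonneg (by positivity)]

lemma rayleigh_lower {n : ℕ} (H : EuclideanSpace ℝ (Fin n) →L[ℝ] EuclideanSpace ℝ (Fin n))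
    (s : EuclideanSpace ℝ (Fin n)) :
    lamMin (fun v => H v) * ‖s‖ ^ 2 ≤ ⟪s, H s⟫ := by
  rcases eq_or_ne s 0 with rfl | hs
  · simp
  · have hsn : 0 < ‖s‖ := norm_pos_iff.2 hs
    set v : EuclideanSpace ℝ (Fin n) := ‖s‖⁻¹ • s with hv_def
    have hv : ‖v‖ = 1 := by
      rw [hv_def, norm_smul, norm_inv, norm_norm, inv_mul_cancel₀ hsn.ne']
    have hvH : ⟪v, H v⟫ = ‖s‖⁻¹ ^ 2 * ⟪s, H s⟫ := by
      rw [hv_def, map_smul, real_inner_smul_left, real_inner_smul_right]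
      ring
    have hbdd : BddBelow {r : ℝ | ∃ w : EuclideanSpace ℝ (Fin n), ‖w‖ = 1 ∧ ⟪w, H w⟫ = r} := by
      refine ⟨-‖H‖, fun r hr => ?_⟩
      obtain ⟨w, hw, hwr⟩ := hr
      have h1 : |⟪w, H w⟫| ≤ ‖w‖ * ‖H w‖ := abs_real_inner_le_norm w (H w)
      have h2 : ‖H w‖ ≤ ‖H‖ * ‖w‖ := H.le_opNorm w
      rw [← hwr]
      rw [hw] at h1 h2
      have := (neg_abs_le ⟪w, H w⟫)
      simp only [one_mul, mul_one] at h1 h2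
      linarith
    have hmem : ⟪v, H v⟫ ∈ {r : ℝ | ∃ w : EuclideanSpace ℝ (Fin n), ‖w‖ = 1 ∧ ⟪w, H w⟫ = r} :=
      ⟨v, hv, rfl⟩
    have hle : lamMin (fun v => H v) ≤ ⟪v, H v⟫ := csInf_le hbdd hmem
    have h3 : ⟪s, H s⟫ = ‖s‖ ^ 2 * ⟪v, H v⟫ := by
      rw [hvH]
      field_simp
    rw [h3]
    nlinarith [sq_nonneg ‖s‖]


/-- Lemma 3.3 of the paper, inequality (3.15): gradient growth after a
regularized Newton step. -/
theorem gradient_growth_neig_step {n : ℕ}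
    (f : EuclideanSpace ℝ (Fin n) → ℝ)
    (Hess : EuclideanSpace ℝ (Fin n) → EuclideanSpace ℝ (Fin n) →L[ℝ] EuclideanSpace ℝ (Fin n))
    (LH : ℝ)
    (hf : ContDiff ℝ 2 f)
    (hHess : ∀ y, HasFDerivAt (gradient f) (Hess y) y)
    (hLip : ∀ y z, ‖Hess y - Hess z‖ ≤ LH * ‖y - z‖)
    (x s : EuclideanSpace ℝ (Fin n))
    (hg : gradient f x ≠ 0)
    (σ ς₃ κθ κC : ℝ) (hσ : 0 < σ) (hς₃0 : 0 ≤ ς₃) (hς₃1 : ς₃ < 1) (hκθ : 0 < κθ)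
    (hκC : 0 < κC)
    (μ : ℝ) (hμ : μ = max (-(lamMin fun v => Hess x v)) 0)
    (hμκ : μ ≤ κC * Real.sqrt (σ * ‖gradient f x‖))
    (hres : ‖Hess x s + (Real.sqrt (σ * ‖gradient f x‖) + μ) • s + gradient f x‖
      ≤ min (ς₃ * Real.sqrt (σ * ‖gradient f x‖) * ‖s‖) (κθ * ‖gradient f x‖)) :
    ‖gradient f (x + s)‖
      ≤ (LH * (1 + κθ) / (2 * σ) + 1 + ς₃ + κC) * (1 + κθ) * ‖gradient f x‖ := by
  set g : EuclideanSpace ℝ (Fin n) := gradient f x with hg_def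
  set G : ℝ := ‖g‖ with hG_def
  have hG : 0 < G := norm_pos_iff.2 hg
  set lam : ℝ := Real.sqrt (σ * G) with hlam_def
  have hlam : 0 < lam := Real.sqrt_pos.2 (by positivity)
  have hlam2 : lam ^ 2 = σ * G := Real.sq_sqrt (by positivity)
  set r : EuclideanSpace ℝ (Fin n) := Hess x s + (lam + μ) • s + g with hr_def
  have hr1 : ‖r‖ ≤ ς₃ * (lam * ‖s‖) := by
    have := hres.trans (min_le_left _ _); linarith [this, mul_assoc ς₃ lam ‖s‖ ▸ this]
  have hr2 : ‖r‖ ≤ κθ * G := hres.trans (min_le_right _ _)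
  have hμ0 : 0 ≤ μ := hμ ▸ le_max_right _ _
  -- LH ≥ 0
  have hLH : 0 ≤ LH := by
    have h := hLip (x + g) x
    have h2 : ‖x + g - x‖ = G := by rw [add_sub_cancel_left]
    rw [h2] at h
    nlinarith [norm_nonneg (Hess (x + g) - Hess x)]
  -- Rayleigh: ⟪s, Hess x s⟫ ≥ -μ ‖s‖²
  have hray : -(μ * ‖s‖ ^ 2) ≤ ⟪s, Hess x s⟫ := by
    have h1 := rayleigh_lower (Hess x) s
    have h2 : -μ ≤ lamMin fun v => Hess x v := by
      rw [hμ]; have := le_max_left (-(lamMin fun v => Hess x v)) 0; linarith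
    nlinarith [sq_nonneg ‖s‖]
  -- key: lam ‖s‖² ≤ ‖s‖ (1+κθ) G
  have hkey : lam * ‖s‖ ^ 2 ≤ ‖s‖ * ((1 + κθ) * G) := by
    have hinner : ⟪s, r⟫ = ⟪s, Hess x s⟫ + (lam + μ) * ‖s‖ ^ 2 + ⟪s, g⟫ := by
      rw [hr_def, inner_add_right, inner_add_right, real_inner_smul_right,
        real_inner_self_eq_norm_sq]
    have h1 : ⟪s, r⟫ ≤ ‖s‖ * ‖r‖ := real_inner_le_norm s r
    have h2 : -(‖s‖ * ‖g‖) ≤ ⟪s, g⟫ := by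
      have := abs_real_inner_le_norm s g
      have := neg_abs_le ⟪s, g⟫
      linarith
    have h3 : ‖s‖ * ‖r‖ ≤ ‖s‖ * (κθ * G) :=
      mul_le_mul_of_nonneg_left hr2 (norm_nonneg s)
    nlinarith [hray]
  have hA : lam * ‖s‖ ≤ (1 + κθ) * G := by
    rcases eq_or_ne s 0 with rfl | hs0
    · simp; positivity
    · have hsn : 0 < ‖s‖ := norm_pos_iff.2 hs0
      have : lam * ‖s‖ * ‖s‖ ≤ (1 + κθ) * G * ‖s‖ := by nlinarith
      exact le_of_mul_le_mul_right this hsn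
  -- Taylor
  have hT : ‖gradient f (x + s) - g - Hess x s‖ ≤ LH / 2 * ‖s‖ ^ 2 :=
    taylor_grad f Hess LH hLH hHess hLip x s
  -- decomposition
  have hdec : gradient f (x + s) = (gradient f (x + s) - g - Hess x s) + r - (lam + μ) • s := by
    rw [hr_def]; abel
  have hnorm : ‖gradient f (x + s)‖ ≤ LH / 2 * ‖s‖ ^ 2 + ‖r‖ + (lam + μ) * ‖s‖ := by
    rw [hdec]
    refine (norm_sub_le _ _).trans ?_
    have h1 : ‖(gradient f (x + s) - g - Hess x s) + r‖
        ≤ LH / 2 * ‖s‖ ^ 2 + ‖r‖ := (norm_add_le _ _).trans (by linarith)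
    have h2 : ‖(lam + μ) • s‖ = (lam + μ) * ‖s‖ := by
      rw [norm_smul, Real.norm_eq_abs, abs_of_nonneg (by linarith)]
    linarith
  -- assemble
  have hs2 : ‖s‖ ^ 2 ≤ (1 + κθ) ^ 2 * G / σ := by
    have hsq : (lam * ‖s‖) ^ 2 ≤ ((1 + κθ) * G) ^ 2 := by
      have h0 : 0 ≤ lam * ‖s‖ := by positivity
      nlinarith
    rw [le_div_iff₀ hσ]
    nlinarith [hlam2, sq_nonneg ‖s‖]
  have p1 : LH / 2 * ‖s‖ ^ 2 ≤ LH * (1 + κθ) ^ 2 * G / (2 * σ) := by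
    have := mul_le_mul_of_nonneg_left hs2 (by linarith : (0:ℝ) ≤ LH / 2)
    calc LH / 2 * ‖s‖ ^ 2 ≤ LH / 2 * ((1 + κθ) ^ 2 * G / σ) := this
      _ = LH * (1 + κθ) ^ 2 * G / (2 * σ) := by field_simp
  have p2 : ‖r‖ ≤ ς₃ * ((1 + κθ) * G) :=
    hr1.trans (mul_le_mul_of_nonneg_left hA hς₃0)
  have p4 : μ * ‖s‖ ≤ κC * ((1 + κθ) * G) := by
    have h1 : μ * ‖s‖ ≤ κC * lam * ‖s‖ := mul_le_mul_of_nonneg_right hμκ (norm_nonneg s)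
    have h2 : κC * (lam * ‖s‖) ≤ κC * ((1 + κθ) * G) := mul_le_mul_of_nonneg_left hA hκC.le
    nlinarith
  have hrhs : (LH * (1 + κθ) / (2 * σ) + 1 + ς₃ + κC) * (1 + κθ) * G
      = LH * (1 + κθ) ^ 2 * G / (2 * σ) + ς₃ * ((1 + κθ) * G) + (1 + κθ) * G
        + κC * ((1 + κθ) * G) := by
    field_simp; ring
  rw [hrhs]
  linarith
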